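/- One-sided maximum principle: let 0 < α < 1, a < b, and φ a Schwartz function with (D_right)^α φ ≤ 0 on [a,b) and φ ≤ 0 on [b,∞). Then sup_{x > a} φ(x) = sup_{x > b} φ(x). -/

import Mathlib

open Real MeasureTheory

/-- The right fractional derivative of order `α`:
`(D_right)^α φ(x) = (1/Γ(-α)) ∫_x^∞ (φ(t) - φ(x))/(t-x)^{1+α} dt`. -/
noncomputable def Dright (α : ℝ) (φ : ℝ → ℝ) (x : ℝ) : ℝ :=
  (1 / Real.Gamma (-α)) * ∫ t in Set.Ioi x, (φ t - φ x) / (t - x) ^ (1 + α)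


open Set Filter in
private lemma sup_zero_aux (c : ℝ) (φ : SchwartzMap ℝ ℝ) (h : ∀ x ∈ Set.Ioi c, φ x ≤ 0) :
    ⨆ x : Set.Ioi c, φ x = 0 := by
  have hne : Nonempty (Set.Ioi c) := Set.nonempty_Ioi.to_subtype
  have hbdd : BddAbove (Set.range fun x : Set.Ioi c => φ x) := by
    refine ⟨SchwartzMap.seminorm ℝ 0 0 φ, ?_⟩
    rintro y ⟨⟨x, hx⟩, rfl⟩
    exact (le_abs_self _).trans (φ.norm_le_seminorm ℝ x)
  have htend : Tendsto (fun x => φ x) atTop (nhds 0) := by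
    have := φ.toZeroAtInfty.zero_at_infty'
    exact this.mono_left (le_trans atTop_le_cocompact le_rfl)
  refine le_antisymm (ciSup_le fun ⟨x, hx⟩ => h x hx) ?_
  rw [iSup, le_csSup_iff hbdd (Set.range_nonempty _)]
  intro ub hub
  rw [mem_upperBounds] at hub
  refine le_of_tendsto htend ?_
  filter_upwards [eventually_gt_atTop c] with x hx
  exact hub _ ⟨⟨x, hx⟩, rfl⟩

open Set Filter in
private lemma key_nonpos (α : ℝ) (hα : 0 < α) (hα1 : α < 1)
    (a b : ℝ) (hab : a < b) (φ : SchwartzMap ℝ ℝ)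
    (hf : ∀ x ∈ Set.Ico a b, Dright α (fun y => φ y) x ≤ 0)
    (hb : ∀ x, b ≤ x → φ x ≤ 0) :
    ∀ x ∈ Set.Ioi a, φ x ≤ 0 := by
  by_contra hcon
  push_neg at hcon
  obtain ⟨x', hx'a, hx'pos⟩ := hcon
  have hx'b : x' < b := by
    by_contra h
    push_neg at h
    exact absurd (hb x' h) (not_le.mpr hx'pos)
  obtain ⟨x0, hx0mem, hmax⟩ :=
    isCompact_Icc.exists_isMaxOn (Set.nonempty_Icc.mpr hab.le) φ.continuous.continuousOn
  have hφx0 : 0 < φ x0 := lt_of_lt_of_le hx'pos (hmax ⟨hx'a.le, hx'b.le⟩)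
  have hx0b : x0 < b := lt_of_le_of_ne hx0mem.2 (by
    intro h; exact absurd (h ▸ hb b le_rfl) (not_le.mpr (h ▸ hφx0)))
  have hle : ∀ t, x0 < t → φ t ≤ φ x0 := by
    intro t ht
    rcases le_or_gt t b with h | h
    · exact hmax ⟨hx0mem.1.trans ht.le, h⟩
    · exact (hb t h.le).trans hφx0.le
  -- Gamma (-α) < 0
  have hΓ : Real.Gamma (-α) < 0 := by
    have h1 := Real.Gamma_add_one (neg_ne_zero.mpr hα.ne')
    have h2 : 0 < Real.Gamma (-α + 1) := Real.Gamma_pos_of_pos (by linarith)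
    nlinarith
  -- derivative bound
  obtain ⟨C₁, hC₁⟩ := φ.decay 0 1
  simp only [pow_zero, one_mul] at hC₁
  have hfd : ∀ x : ℝ, ‖fderiv ℝ (fun y => φ y) x‖ ≤ C₁ := by
    intro x
    have h1 : ‖iteratedFDeriv ℝ 0 (fderiv ℝ (fun y => φ y)) x‖ =
        ‖iteratedFDeriv ℝ 1 (fun y => φ y) x‖ := norm_iteratedFDeriv_fderiv
    rw [norm_iteratedFDeriv_zero] at h1
    rw [h1]; exact hC₁.2 x
  have hdiff : Differentiable ℝ (fun y => φ y) := φ.differentiable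
  have hlip : ∀ t : ℝ, |φ t - φ x0| ≤ C₁ * |t - x0| := by
    intro t
    have := convex_univ.norm_image_sub_le_of_norm_fderiv_le
      (fun x _ => (hdiff x)) (fun x _ => hfd x)
      (Set.mem_univ x0) (Set.mem_univ t)
    simpa [Real.norm_eq_abs] using this
  set M := SchwartzMap.seminorm ℝ 0 0 φ with hMdef
  have hM : ∀ x : ℝ, |φ x| ≤ M := fun x => φ.norm_le_seminorm ℝ x
  set B := max b (x0 + 1) with hBdef
  have hx0B : x0 < B := lt_of_lt_of_le (by linarith) (le_max_right _ _)
  have hbB : b ≤ B := le_max_left _ _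
  have h1B : x0 + 1 ≤ B := le_max_right _ _
  set ψ : ℝ → ℝ := fun t => (φ t - φ x0) / (t - x0) ^ (1 + α) with hψdef
  have hdpos : ∀ t : ℝ, x0 < t → (0:ℝ) < (t - x0) ^ (1 + α) := fun t ht =>
    Real.rpow_pos_of_pos (sub_pos.mpr ht) _
  have hcont : ContinuousOn ψ (Set.Ioi x0) := by
    apply ContinuousOn.div
    · exact (φ.continuous.sub continuous_const).continuousOn
    · exact ((continuous_id.sub continuous_const).continuousOn).rpow_const
        (fun t ht => Or.inl (sub_pos.mpr ht).ne')
    · exact fun t ht => (hdpos t ht).ne'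
  -- integrability near
  have hboundnear : IntegrableOn (fun t => C₁ * (t - x0) ^ (-α)) (Set.Ioc x0 B) := by
    have h0 : IntervalIntegrable (fun x : ℝ => x ^ (-α)) volume 0 (B - x0) :=
      intervalIntegral.intervalIntegrable_rpow' (by linarith)
    have h1 := h0.comp_sub_right x0
    simp only [zero_add, sub_add_cancel] at h1
    exact ((intervalIntegrable_iff_integrableOn_Ioc_of_le hx0B.le).mp h1).const_mul C₁
  have I1 : IntegrableOn ψ (Set.Ioc x0 B) := by
    refine Integrable.mono' hboundnear
      ((hcont.mono Set.Ioc_subset_Ioi_self).aestronglyMeasurable measurableSet_Ioc) ?_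
    rw [ae_restrict_iff' measurableSet_Ioc]
    refine ae_of_all _ fun t ht => ?_
    have h1 : (0:ℝ) < t - x0 := sub_pos.mpr ht.1
    have hd := hdpos t ht.1
    rw [Real.norm_eq_abs, hψdef]
    have he : (t - x0) ^ (1 + α) = (t - x0) * (t - x0) ^ α := by
      rw [Real.rpow_add h1, Real.rpow_one]
    rw [abs_div, abs_of_pos hd, he, Real.rpow_neg h1.le]
    rw [div_le_iff₀ (by positivity)]
    calc |φ t - φ x0| ≤ C₁ * |t - x0| := hlip t
      _ = C₁ * (t - x0) := by rw [abs_of_pos h1]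
      _ = C₁ * ((t - x0) ^ α)⁻¹ * ((t - x0) * (t - x0) ^ α) := by
          field_simp
  -- integrability far
  have hbase : IntegrableOn (fun x : ℝ => x ^ (-(1 + α))) (Set.Ioi (B - x0)) :=
    integrableOn_Ioi_rpow_of_lt (by linarith) (by linarith)
  have hshift : IntegrableOn (fun t : ℝ => (t - x0) ^ (-(1 + α))) (Set.Ioi B) := by
    have hmp := measurePreserving_sub_right (volume : Measure ℝ) x0
    have hemb := (MeasurableEquiv.subRight x0).measurableEmbedding
    have hpre : (fun t : ℝ => t - x0) ⁻¹' Set.Ioi (B - x0) = Set.Ioi B := by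
      ext t; simp [sub_lt_sub_iff_right]
    have := (hmp.integrableOn_comp_preimage hemb).mpr hbase
    rwa [hpre] at this
  have hboundfar : IntegrableOn (fun t => (M + M) * (t - x0) ^ (-(1 + α))) (Set.Ioi B) :=
    hshift.const_mul _
  have I2 : IntegrableOn ψ (Set.Ioi B) := by
    refine Integrable.mono' hboundfar
      ((hcont.mono (Set.Ioi_subset_Ioi hx0B.le)).aestronglyMeasurable measurableSet_Ioi) ?_
    rw [ae_restrict_iff' measurableSet_Ioi]
    refine ae_of_all _ fun t ht => ?_
    have ht' : x0 < t := hx0B.trans ht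
    have h1 : (0:ℝ) < t - x0 := sub_pos.mpr ht'
    have hd := hdpos t ht'
    rw [Real.norm_eq_abs, hψdef]
    rw [abs_div, abs_of_pos hd, Real.rpow_neg h1.le, div_eq_mul_inv]
    refine mul_le_mul_of_nonneg_right ?_ (inv_nonneg.mpr hd.le)
    exact (abs_sub _ _).trans (add_le_add (hM t) (hM x0))
  have I : IntegrableOn ψ (Set.Ioi x0) := by
    rw [← Set.Ioc_union_Ioi_eq_Ioi hx0B.le]
    exact I1.union I2
  have hψneg : ∀ t ∈ Set.Ioi x0, ψ t ≤ 0 := fun t ht =>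
    div_nonpos_of_nonpos_of_nonneg (sub_nonpos.mpr (hle t ht)) (hdpos t ht).le
  have hJ1 : ∫ t in Set.Ioc x0 B, ψ t ≤ 0 :=
    setIntegral_nonpos measurableSet_Ioc (fun t ht => hψneg t ht.1)
  have hI3pos : 0 < ∫ t in Set.Ioi B, (t - x0) ^ (-(1 + α)) := by
    rw [setIntegral_pos_iff_support_of_nonneg_ae]
    · have hsub : Set.Ioi B ⊆
          Function.support (fun t : ℝ => (t - x0) ^ (-(1 + α))) ∩ Set.Ioi B := fun t ht =>
        ⟨(Real.rpow_pos_of_pos (sub_pos.mpr (hx0B.trans ht)) _).ne', ht⟩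
      calc (0 : ENNReal) < volume (Set.Ioi B) := by simp [Real.volume_Ioi]
        _ ≤ _ := measure_mono hsub
    · filter_upwards [ae_restrict_mem measurableSet_Ioi] with t ht
      exact (Real.rpow_pos_of_pos (sub_pos.mpr (hx0B.trans ht)) _).le
    · exact hshift
  have hJ2 : ∫ t in Set.Ioi B, ψ t
      ≤ -φ x0 * ∫ t in Set.Ioi B, (t - x0) ^ (-(1 + α)) := by
    rw [← integral_const_mul]
    refine setIntegral_mono_on I2 (hshift.const_mul _) measurableSet_Ioi fun t ht => ?_
    have ht' : x0 < t := hx0B.trans ht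
    have h1 : (0:ℝ) < t - x0 := sub_pos.mpr ht'
    have hd := hdpos t ht'
    show (φ t - φ x0) / (t - x0) ^ (1 + α) ≤ -φ x0 * (t - x0) ^ (-(1 + α))
    rw [Real.rpow_neg h1.le, ← div_eq_mul_inv]
    have hφt : φ t ≤ 0 := hb t (hbB.trans ht.le)
    gcongr
    linarith
  have hJ2neg : ∫ t in Set.Ioi B, ψ t < 0 :=
    lt_of_le_of_lt hJ2 (mul_neg_of_neg_of_pos (neg_lt_zero.mpr hφx0) hI3pos)
  have hInt : ∫ t in Set.Ioi x0, ψ t < 0 := by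
    rw [← Set.Ioc_union_Ioi_eq_Ioi hx0B.le,
      setIntegral_union (Set.Ioc_disjoint_Ioi le_rfl) measurableSet_Ioi I1 I2]
    linarith
  have hD : 0 < Dright α (fun y => φ y) x0 := by
    have h1 : 1 / Real.Gamma (-α) < 0 := div_neg_of_pos_of_neg one_pos hΓ
    exact mul_pos_of_neg_of_neg h1 hInt
  exact absurd (hf x0 ⟨hx0mem.1, hx0b⟩) (not_le.mpr hD)

/-- One-sided maximum principle: the supremum over `(a,∞)` is attained on `(b,∞)`. -/
theorem one_sided_maximum_principle (α : ℝ) (hα : 0 < α) (hα1 : α < 1)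
    (a b : ℝ) (hab : a < b) (φ : SchwartzMap ℝ ℝ)
    (hf : ∀ x ∈ Set.Ico a b, Dright α (fun y => φ y) x ≤ 0)
    (hb : ∀ x, b ≤ x → φ x ≤ 0) :
    ⨆ x : Set.Ioi a, φ x = ⨆ x : Set.Ioi b, φ x := by
  rw [sup_zero_aux a φ (key_nonpos α hα hα1 a b hab φ hf hb),
    sup_zero_aux b φ (fun x hx => hb x (le_of_lt hx))]
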